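/- Let n > 2 and fix M ∈ ℂ with M ≠ 0 and M ≠ 1. Define the holomorphic matrix T_n(z) ∈ M_n(ℂ) as the block-diagonal matrix with upper-left block M·I_{n−2} and lower-right block [[exp(z), 1], [0, 1]]. Then there is no holomorphic mapping S : ℂ → M_n(ℂ) such that S(z)·S(z) = T_n(z) for all z ∈ ℂ. -/

import Mathlib

open Complex Matrix Filter Topology

private lemma vanish_of_mul_exp_sub {M : ℂ} (hM0 : M ≠ 0) (f : ℂ → ℂ) (hf : Continuous f)
    (h : ∀ z, (Complex.exp z - M) * f z = 0) : ∀ z, f z = 0 := by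
  intro z₀
  by_cases he : Complex.exp z₀ = M
  · have key : ∀ n : ℕ, f (z₀ + ((1 / (n + 1) : ℝ) : ℂ)) = 0 := by
      intro n
      have hne : Complex.exp (z₀ + ((1 / (n + 1) : ℝ) : ℂ)) ≠ M := by
        rw [Complex.exp_add, he]
        intro h'
        have h1 : Complex.exp ((1 / (n + 1) : ℝ) : ℂ) = 1 :=
          mul_left_cancel₀ hM0 (h'.trans (mul_one M).symm)
        rw [← Complex.ofReal_exp] at h1
        have h2 : Real.exp (1 / (n + 1)) = 1 := by exact_mod_cast h1
        have h3 : (1 : ℝ) / (n + 1) = 0 := (Real.exp_eq_one_iff _).mp h2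
        have h4 : (0 : ℝ) < 1 / (n + 1) := by positivity
        linarith
      exact (mul_eq_zero.mp (h _)).resolve_left (sub_ne_zero.mpr hne)
    have hseq : Tendsto (fun n : ℕ => z₀ + ((1 / (n + 1) : ℝ) : ℂ)) atTop (𝓝 z₀) := by
      have h1 : Tendsto (fun n : ℕ => (1 / (n + 1) : ℝ)) atTop (𝓝 0) :=
        tendsto_one_div_add_atTop_nhds_zero_nat
      have h2 := (Complex.continuous_ofReal.tendsto 0).comp h1
      simpa using tendsto_const_nhds.add h2
    have hlim := (hf.tendsto z₀).comp hseq
    simp only [Function.comp_def, key] at hlim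
    exact (tendsto_nhds_unique tendsto_const_nhds hlim).symm
  · exact (mul_eq_zero.mp (h z₀)).resolve_left (sub_ne_zero.mpr he)

/-- For `n > 2` and `M ∈ ℂ \ {0, 1}`, the holomorphic matrix
`T_n(z) = [[M·I_{n-2}, 0], [0, [[e^z, 1], [0, 1]]]]` has no holomorphic square root. -/
theorem stmt7 (n : ℕ) (hn : 2 < n) (M : ℂ) (hM0 : M ≠ 0) (hM1 : M ≠ 1) :
    ¬ ∃ S : ℂ → Matrix (Fin (n - 2) ⊕ Fin 2) (Fin (n - 2) ⊕ Fin 2) ℂ,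
      (∀ i j : Fin (n - 2) ⊕ Fin 2, Differentiable ℂ fun z => S z i j) ∧
      (∀ z : ℂ, S z * S z =
        Matrix.fromBlocks (M • (1 : Matrix (Fin (n - 2)) (Fin (n - 2)) ℂ)) 0 0
          !![Complex.exp z, 1; 0, 1]) := by
  rintro ⟨S, hdiff, hmul⟩
  set T : ℂ → Matrix (Fin (n - 2) ⊕ Fin 2) (Fin (n - 2) ⊕ Fin 2) ℂ := fun z =>
    Matrix.fromBlocks (M • (1 : Matrix (Fin (n - 2)) (Fin (n - 2)) ℂ)) 0 0
      !![Complex.exp z, 1; 0, 1] with hT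
  have hmul' : ∀ z, S z * S z = T z := hmul
  have hcomm : ∀ z, S z * T z = T z * S z := by
    intro z
    rw [← hmul' z]
    exact (mul_assoc _ _ _).symm
  -- the bottom-left block of S vanishes
  have hD1 : ∀ z k, S z (Sum.inr 1) (Sum.inl k) = 0 := by
    intro z k
    have h := congrFun (congrFun (hcomm z) (Sum.inr 1)) (Sum.inl k)
    simp [hT, Matrix.mul_apply, Fintype.sum_sum_type, Fin.sum_univ_two,
      Matrix.one_apply, mul_ite, Finset.sum_ite_eq'] at h
    have h2 : S z (Sum.inr 1) (Sum.inl k) * (M - 1) = 0 := by linear_combination h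
    exact (mul_eq_zero.mp h2).resolve_right (sub_ne_zero.mpr hM1)
  have hD0 : ∀ z k, S z (Sum.inr 0) (Sum.inl k) = 0 := by
    intro z k
    refine vanish_of_mul_exp_sub hM0 (fun z => S z (Sum.inr 0) (Sum.inl k))
      ((hdiff _ _).continuous) (fun w => ?_) z
    have h := congrFun (congrFun (hcomm w) (Sum.inr 0)) (Sum.inl k)
    simp [hT, Matrix.mul_apply, Fintype.sum_sum_type, Fin.sum_univ_two,
      Matrix.one_apply, mul_ite, Finset.sum_ite_eq', hD1] at h
    show (Complex.exp w - M) * S w (Sum.inr 0) (Sum.inl k) = 0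
    linear_combination -h
  -- entries of the lower-right 2×2 block
  have e01 : ∀ z, S z (Sum.inr 0) (Sum.inr 0) * S z (Sum.inr 0) (Sum.inr 1)
      + S z (Sum.inr 0) (Sum.inr 1) * S z (Sum.inr 1) (Sum.inr 1) = 1 := by
    intro z
    have h := congrFun (congrFun (hmul' z) (Sum.inr 0)) (Sum.inr 1)
    simpa [hT, Matrix.mul_apply, Fintype.sum_sum_type, Fin.sum_univ_two, hD0] using h
  have had : ∀ z, S z (Sum.inr 0) (Sum.inr 0) + S z (Sum.inr 1) (Sum.inr 1) ≠ 0 := by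
    intro z hz
    have h := e01 z
    rw [show S z (Sum.inr 0) (Sum.inr 0) * S z (Sum.inr 0) (Sum.inr 1)
        + S z (Sum.inr 0) (Sum.inr 1) * S z (Sum.inr 1) (Sum.inr 1)
        = S z (Sum.inr 0) (Sum.inr 1) * (S z (Sum.inr 0) (Sum.inr 0)
          + S z (Sum.inr 1) (Sum.inr 1)) by ring, hz, mul_zero] at h
    exact zero_ne_one h
  have hc0 : ∀ z, S z (Sum.inr 1) (Sum.inr 0) = 0 := by
    intro z
    have h := congrFun (congrFun (hmul' z) (Sum.inr 1)) (Sum.inr 0)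
    simp [hT, Matrix.mul_apply, Fintype.sum_sum_type, Fin.sum_univ_two, hD1] at h
    have h2 : S z (Sum.inr 1) (Sum.inr 0) * (S z (Sum.inr 0) (Sum.inr 0)
        + S z (Sum.inr 1) (Sum.inr 1)) = 0 := by linear_combination h
    exact (mul_eq_zero.mp h2).resolve_right (had z)
  have e00 : ∀ z, S z (Sum.inr 0) (Sum.inr 0) * S z (Sum.inr 0) (Sum.inr 0)
      = Complex.exp z := by
    intro z
    have h := congrFun (congrFun (hmul' z) (Sum.inr 0)) (Sum.inr 0)
    simpa [hT, Matrix.mul_apply, Fintype.sum_sum_type, Fin.sum_univ_two, hD0, hc0] using h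
  have e11 : ∀ z, S z (Sum.inr 1) (Sum.inr 1) * S z (Sum.inr 1) (Sum.inr 1) = 1 := by
    intro z
    have h := congrFun (congrFun (hmul' z) (Sum.inr 1)) (Sum.inr 1)
    simpa [hT, Matrix.mul_apply, Fintype.sum_sum_type, Fin.sum_univ_two, hD1, hc0] using h
  set a : ℂ → ℂ := fun z => S z (Sum.inr 0) (Sum.inr 0) with ha
  set d : ℂ → ℂ := fun z => S z (Sum.inr 1) (Sum.inr 1) with hd
  have e00' : ∀ z, a z * a z = Complex.exp z := e00
  have e11' : ∀ z, d z * d z = 1 := e11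
  have had' : ∀ z, a z + d z ≠ 0 := had
  have hda : Differentiable ℂ a := hdiff _ _
  have hdd : Differentiable ℂ d := hdiff _ _
  have hane : ∀ z, a z ≠ 0 := by
    intro z hz
    exact Complex.exp_ne_zero z (by rw [← e00' z, hz, mul_zero])
  have hdne : ∀ z, d z ≠ 0 := by
    intro z hz
    have h := e11' z
    rw [hz, mul_zero] at h
    exact zero_ne_one h
  -- d is constant
  have hdconst : ∀ z, d z = d 0 := by
    have hder : ∀ z, deriv d z = 0 := by
      intro z
      have h1 : HasDerivAt (fun w => d w * d w) (deriv d z * d z + d z * deriv d z) z :=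
        ((hdd z).hasDerivAt).mul ((hdd z).hasDerivAt)
      rw [show (fun w => d w * d w) = fun _ => (1 : ℂ) from funext e11'] at h1
      have h3 := h1.unique (hasDerivAt_const z (1 : ℂ))
      have h4 : deriv d z * (2 * d z) = 0 := by linear_combination h3
      rcases mul_eq_zero.mp h4 with h5 | h5
      · exact h5
      · rcases mul_eq_zero.mp h5 with h6 | h6
        · exact absurd h6 two_ne_zero
        · exact absurd h6 (hdne z)
    exact fun z => is_const_of_deriv_eq_zero hdd hder z 0
  -- a z = a 0 * exp (z / 2)
  have haderiv : ∀ z, deriv a z = a z / 2 := by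
    intro z
    have h1 : HasDerivAt (fun w => a w * a w) (deriv a z * a z + a z * deriv a z) z :=
      ((hda z).hasDerivAt).mul ((hda z).hasDerivAt)
    rw [show (fun w => a w * a w) = fun w => Complex.exp w from funext e00'] at h1
    have h3 := h1.unique (Complex.hasDerivAt_exp z)
    have h4 : (deriv a z - a z / 2) * (2 * a z) = 0 := by
      linear_combination h3 - e00' z
    rcases mul_eq_zero.mp h4 with h5 | h5
    · linear_combination h5
    · rcases mul_eq_zero.mp h5 with h6 | h6
      · exact absurd h6 two_ne_zero
      · exact absurd h6 (hane z)
  have haform : ∀ z, a z = a 0 * Complex.exp (z / 2) := by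
    have hg : ∀ z, HasDerivAt (fun w => a w * Complex.exp (-(w / 2))) 0 z := by
      intro z
      have h1 : HasDerivAt (fun w => -(w / 2)) (-(1 / 2) : ℂ) z :=
        ((hasDerivAt_id z).div_const 2).neg
      have h2 : HasDerivAt (fun w => a w * Complex.exp (-(w / 2)))
          (deriv a z * Complex.exp (-(z / 2)) + a z * (Complex.exp (-(z / 2)) * -(1 / 2))) z :=
        ((hda z).hasDerivAt).mul h1.cexp
      convert h2 using 1
      rw [haderiv z]
      ring
    have hgd : Differentiable ℂ fun w => a w * Complex.exp (-(w / 2)) :=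
      fun z => (hg z).differentiableAt
    intro z
    have h3 := is_const_of_deriv_eq_zero hgd (fun z => (hg z).deriv) z 0
    simp only [neg_zero, zero_div, Complex.exp_zero, mul_one] at h3
    have h4 : Complex.exp (-(z / 2)) * Complex.exp (z / 2) = 1 := by
      rw [← Complex.exp_add]; simp
    calc a z = a z * (Complex.exp (-(z / 2)) * Complex.exp (z / 2)) := by rw [h4, mul_one]
    _ = a z * Complex.exp (-(z / 2)) * Complex.exp (z / 2) := by ring
    _ = a 0 * Complex.exp (z / 2) := by rw [h3]
  -- contradiction at z = 2πi
  have hw : a (2 * (Real.pi : ℂ) * I) = -a 0 := by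
    rw [haform, show (2 * (Real.pi : ℂ) * I) / 2 = (Real.pi : ℂ) * I by ring,
      Complex.exp_pi_mul_I]
    ring
  have h0 : a 0 + d 0 ≠ 0 := had' 0
  have h1 : -a 0 + d 0 ≠ 0 := by
    have := had' (2 * (Real.pi : ℂ) * I)
    rwa [hw, hdconst] at this
  have hkey : (d 0 - a 0) * (d 0 + a 0) = 0 := by
    have h2 := e00' 0
    rw [Complex.exp_zero] at h2
    linear_combination e11' 0 - h2
  rcases mul_eq_zero.mp hkey with h3 | h3
  · exact h1 (by linear_combination h3)
  · exact h0 (by linear_combination h3)
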